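/- The space 𝓗′ of triples of projective lines in ℝP² with pairwise distinct intersection points is homotopy equivalent to the complete flag variety Flag(ℝ³), the subspace of Gr(1,ℝ³) × Gr(2,ℝ³) consisting of pairs (V₁,V₂) with V₁ ⊂ V₂. -/

import Mathlib

open Module Matrix CategoryTheory

noncomputable section

/-- `ℝ^m` with its Euclidean topology and inner product. -/
abbrev Euc (m : ℕ) : Type := EuclideanSpace ℝ (Fin m)

/-- The Grassmannian `Gr(k, ℝ^m)` of `k`-dimensional linear subspaces of `ℝ^m`. -/
def Gr (k m : ℕ) : Type :=
  { V : Submodule ℝ (Euc m) // finrank ℝ V = k }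

/-- The standard topology on the Grassmannian, induced by sending a subspace to the
orthogonal projection onto it. -/
noncomputable instance (k m : ℕ) : TopologicalSpace (Gr k m) :=
  TopologicalSpace.induced
    (fun V : Gr k m =>
      (V.1.subtypeL.comp (Submodule.orthogonalProjectionOnto V.1) : Euc m →L[ℝ] Euc m))
    inferInstance

/-- The condition that a triple of projective lines (i.e. 2-dimensional subspaces) has
pairwise distinct intersection points: each pairwise intersection is 1-dimensional, and
the three intersections are pairwise distinct. -/
def GoodTriple {m : ℕ} (p : Gr 2 m × Gr 2 m × Gr 2 m) : Prop :=
  finrank ℝ ↥(p.1.1 ⊓ p.2.1.1) = 1 ∧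
  finrank ℝ ↥(p.1.1 ⊓ p.2.2.1) = 1 ∧
  finrank ℝ ↥(p.2.1.1 ⊓ p.2.2.1) = 1 ∧
  p.1.1 ⊓ p.2.1.1 ≠ p.1.1 ⊓ p.2.2.1 ∧
  p.1.1 ⊓ p.2.1.1 ≠ p.2.1.1 ⊓ p.2.2.1 ∧
  p.1.1 ⊓ p.2.2.1 ≠ p.2.1.1 ⊓ p.2.2.1

/-- The space of triples of projective lines in `ℝP^{m-1}` with pairwise distinct
intersection points, as a subspace of `Gr(2,ℝ^m)³`. -/
def Triples (m : ℕ) : Type :=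
  { p : Gr 2 m × Gr 2 m × Gr 2 m // GoodTriple p }

instance (m : ℕ) : TopologicalSpace (Triples m) :=
  inferInstanceAs (TopologicalSpace { p : Gr 2 m × Gr 2 m × Gr 2 m // GoodTriple p })

/-- The (partial) flag variety of flags of signature `(0,1,2,3,m)` in `ℝ^m`;
for `m = 4` this is the complete flag variety `Flag(ℝ⁴)`. -/
def Flag123 (m : ℕ) : Type :=
  { v : Gr 1 m × Gr 2 m × Gr 3 m // v.1.1 ≤ v.2.1.1 ∧ v.2.1.1 ≤ v.2.2.1 }

instance (m : ℕ) : TopologicalSpace (Flag123 m) :=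
  inferInstanceAs (TopologicalSpace
    { v : Gr 1 m × Gr 2 m × Gr 3 m // v.1.1 ≤ v.2.1.1 ∧ v.2.1.1 ≤ v.2.2.1 })

/-- The complete flag variety `Flag(ℝ³)`. -/
def FlagR3 : Type := { v : Gr 1 3 × Gr 2 3 // v.1.1 ≤ v.2.1 }

instance : TopologicalSpace FlagR3 :=
  inferInstanceAs (TopologicalSpace { v : Gr 1 3 × Gr 2 3 // v.1.1 ≤ v.2.1 })

/-- The kernel of the linear functional `rᵢ(A) : ℝ^m → ℝ`, `x ↦ ∑ⱼ A i j * x j`,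
given by the `i`-th row of `A`. -/
def rowKer {m : ℕ} (A : Matrix (Fin m) (Fin m) ℝ) (i : Fin m) : Submodule ℝ (Euc m) :=
  LinearMap.ker ((∑ j : Fin m, A i j • (EuclideanSpace.proj j : Euc m →L[ℝ] ℝ) : Euc m →L[ℝ] ℝ) : Euc m →ₗ[ℝ] ℝ)

/-- The span of the first `k` columns of a matrix `A`, as a subspace of `ℝ^m`. -/
def colSpan {m : ℕ} (A : Matrix (Fin m) (Fin m) ℝ) (k : ℕ) : Submodule ℝ (Euc m) :=
  Submodule.span ℝ
    ((fun j : Fin m => (EuclideanSpace.equiv (Fin m) ℝ).symm (fun i => A i j)) ''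
      { j : Fin m | (j : ℕ) < k })

/-- The product of diagonal matrices is diagonal. -/
theorem isDiag_mul' {n : ℕ} {A B : Matrix (Fin n) (Fin n) ℝ}
    (hA : A.IsDiag) (hB : B.IsDiag) : (A * B).IsDiag := by
  intro i j hij
  rw [Matrix.mul_apply]
  refine Finset.sum_eq_zero fun k _ => ?_
  rcases eq_or_ne i k with rfl | hk
  · rw [hB hij, mul_zero]
  · rw [hA hk, zero_mul]

/-- The subgroup `T` of `GL(n,ℝ)` consisting of invertible diagonal matrices. -/
def diagGL (n : ℕ) : Subgroup (Matrix.GeneralLinearGroup (Fin n) ℝ) where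
  carrier := { A | (A : Matrix (Fin n) (Fin n) ℝ).IsDiag }
  one_mem' := Matrix.isDiag_one
  mul_mem' := fun ha hb => isDiag_mul' ha hb
  inv_mem' := by
    intro A hA
    show ((A⁻¹ : Matrix.GeneralLinearGroup (Fin n) ℝ) : Matrix (Fin n) (Fin n) ℝ).IsDiag
    rw [Matrix.coe_units_inv, ← Matrix.IsDiag.diagonal_diag hA, Matrix.inv_diagonal]
    exact Matrix.isDiag_diagonal _

/-- The orthogonal group `O(n)` of `n × n` real orthogonal matrices. -/
abbrev Orth (n : ℕ) := Matrix.orthogonalGroup (Fin n) ℝ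

/-- The subgroup `T ∩ O(n)` of diagonal orthogonal matrices (diagonal entries `±1`). -/
def diagOrth (n : ℕ) : Subgroup ↥(Orth n) where
  carrier := { A | (A : Matrix (Fin n) (Fin n) ℝ).IsDiag }
  one_mem' := Matrix.isDiag_one
  mul_mem' := fun ha hb => isDiag_mul' ha hb
  inv_mem' := by
    intro A hA
    show ((A⁻¹ : ↥(Orth n)) : Matrix (Fin n) (Fin n) ℝ).IsDiag
    rw [Matrix.UnitaryGroup.inv_val, Matrix.star_eq_conjTranspose]
    exact hA.conjTranspose

/-- `SO(n)`, as the subgroup of `O(n)` of matrices of determinant `1`. -/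
def SOsub (n : ℕ) : Subgroup ↥(Orth n) where
  carrier := { A | (A : Matrix (Fin n) (Fin n) ℝ).det = 1 }
  one_mem' := by simp
  mul_mem' := by
    intro a b ha hb
    show ((a * b : ↥(Orth n)) : Matrix (Fin n) (Fin n) ℝ).det = 1
    rw [Matrix.UnitaryGroup.mul_val, Matrix.det_mul, ha, hb, mul_one]
  inv_mem' := by
    intro A hA
    show ((A⁻¹ : ↥(Orth n)) : Matrix (Fin n) (Fin n) ℝ).det = 1
    rw [Matrix.UnitaryGroup.inv_val, Matrix.star_eq_conjTranspose, Matrix.det_conjTranspose]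
    simpa using congrArg star hA

/-- The group `SO(n)` of `n × n` real orthogonal matrices of determinant `1`. -/
abbrev SO (n : ℕ) := ↥(SOsub n)

/-- The underlying matrix of an element of `SO(n)`. -/
def soMat {n : ℕ} (A : SO n) : Matrix (Fin n) (Fin n) ℝ :=
  ((A : ↥(Orth n)) : Matrix (Fin n) (Fin n) ℝ)

/-- The subgroup `Kₙ` of `SO(n)` of diagonal matrices
(entries `±1`, determinant `1`). -/
def Kdiag (n : ℕ) : Subgroup (SO n) where
  carrier := { A | (soMat A).IsDiag }
  one_mem' := Matrix.isDiag_one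
  mul_mem' := fun ha hb => isDiag_mul' ha hb
  inv_mem' := by
    intro A hA
    show (soMat A⁻¹).IsDiag
    have h : soMat A⁻¹ = star (soMat A) := rfl
    rw [h, Matrix.star_eq_conjTranspose]
    exact hA.conjTranspose

/-- The Borel subgroup `Bₙ` of `GL(n,ℝ)` of invertible upper-triangular matrices. -/
def upperB (n : ℕ) : Subgroup (Matrix.GeneralLinearGroup (Fin n) ℝ) where
  carrier := { A | (A : Matrix (Fin n) (Fin n) ℝ).BlockTriangular id }
  one_mem' := Matrix.blockTriangular_one
  mul_mem' := fun ha hb => ha.mul hb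
  inv_mem' := by
    intro A hA
    show ((A⁻¹ : Matrix.GeneralLinearGroup (Fin n) ℝ) :
      Matrix (Fin n) (Fin n) ℝ).BlockTriangular id
    rw [Matrix.coe_units_inv]
    haveI := A.invertible
    exact Matrix.blockTriangular_inv_of_blockTriangular hA

/-- The singular chain complex of a topological space: the free simplicial abelian group
on the singular simplicial set, made into a chain complex via alternating face maps. -/
def singularChainComplex (X : Type) [TopologicalSpace X] : ChainComplex AddCommGrpCat ℕ :=
  (AlgebraicTopology.alternatingFaceMapComplex AddCommGrpCat).obj
    (((CategoryTheory.SimplicialObject.whiskering _ _).obj AddCommGrpCat.free).obj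
      (TopCat.toSSet.obj (TopCat.of X)))

/-- The `k`-th integral singular homology group of a topological space. -/
def singularHomology (X : Type) [TopologicalSpace X] (k : ℕ) : AddCommGrpCat :=
  (singularChainComplex X).homology k



set_option maxHeartbeats 1000000

namespace Aux16
open scoped RealInnerProductSpace

variable {m : ℕ}

/-- orthogonal projection onto a submodule, as an endomorphism. -/
def projC (V : Submodule ℝ (Euc m)) : Euc m →L[ℝ] Euc m :=
  V.subtypeL.comp (Submodule.orthogonalProjectionOnto V)

def piG {k m : ℕ} (V : Gr k m) : Euc m →L[ℝ] Euc m := projC V.1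

lemma continuous_piG {k m : ℕ} : Continuous (piG (k := k) (m := m)) :=
  continuous_induced_dom

lemma continuous_into_Gr {X : Type*} [TopologicalSpace X] {k : ℕ} {f : X → Gr k m}
    (h : Continuous fun x => piG (f x)) : Continuous f :=
  continuous_induced_rng.2 h

lemma continuousAt_into_Gr {X : Type*} [TopologicalSpace X] {k : ℕ} {f : X → Gr k m}
    {x : X} (h : ContinuousAt (fun x => piG (f x)) x) : ContinuousAt f x := by
  rw [ContinuousAt, nhds_induced, Filter.tendsto_comap_iff]
  exact h

lemma projC_apply_mem (V : Submodule ℝ (Euc m)) (x : Euc m) : projC V x ∈ V :=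
  SetLike.coe_mem _

lemma projC_apply_of_mem {V : Submodule ℝ (Euc m)} {x : Euc m} (h : x ∈ V) :
    projC V x = x := by
  exact (Submodule.starProjection_eq_self_iff (K := V)).2 h

lemma projC_orthogonal (V : Submodule ℝ (Euc m)) : projC Vᗮ = 1 - projC V := by
  refine ContinuousLinearMap.ext fun x => ?_
  exact Submodule.starProjection_orthogonal_val (K := V) x

end Aux16
namespace Aux16
open scoped RealInnerProductSpace
variable {m : ℕ}

lemma projC_sup_orth {U W : Submodule ℝ (Euc m)} (h : W ≤ Uᗮ) :
    projC (U ⊔ W) = projC U + projC W := by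
  have hU : U ≤ Wᗮ := by
    intro u hu
    rw [Submodule.mem_orthogonal]
    intro w hw
    rw [real_inner_comm]
    exact ((Submodule.mem_orthogonal _ _).1 (h hw) u hu)
  refine ContinuousLinearMap.ext fun x => ?_
  show (U ⊔ W).starProjection x = projC U x + projC W x
  apply Submodule.eq_starProjection_of_mem_orthogonal
  · exact Submodule.add_mem_sup (projC_apply_mem U x) (projC_apply_mem W x)
  · rw [← Submodule.inf_orthogonal]
    constructor
    · have h1 : x - projC U x ∈ Uᗮ := Submodule.sub_starProjection_mem_orthogonal x
      have h2 : projC W x ∈ Uᗮ := h (projC_apply_mem W x)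
      have := Uᗮ.sub_mem h1 h2
      rw [SetLike.mem_coe]
      convert this using 1
      abel
    · have h1 : x - projC W x ∈ Wᗮ := Submodule.sub_starProjection_mem_orthogonal x
      have h2 : projC U x ∈ Wᗮ := hU (projC_apply_mem U x)
      have := Wᗮ.sub_mem h1 h2
      rw [SetLike.mem_coe]
      convert this using 1
      abel

def lineProj (w : Euc m) : Euc m →L[ℝ] Euc m :=
  ((‖w‖ ^ 2)⁻¹ : ℝ) • ((innerSL ℝ w).smulRight w)

lemma lineProj_apply (w x : Euc m) : lineProj w x = ((‖w‖ ^ 2)⁻¹ * ⟪w, x⟫) • w := by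
  simp [lineProj, mul_smul]

lemma projC_span_singleton {w : Euc m} (hw : w ≠ 0) : projC (ℝ ∙ w) = lineProj w := by
  refine ContinuousLinearMap.ext fun x => ?_
  show (ℝ ∙ w).starProjection x = _
  rw [Submodule.starProjection_singleton, lineProj_apply]
  rw [div_eq_inv_mul]
  norm_cast

lemma continuousAt_lineProj {w : Euc m} (hw : w ≠ 0) :
    ContinuousAt (lineProj (m := m)) w := by
  show ContinuousAt ((fun w : Euc m => ((‖w‖ ^ 2)⁻¹ : ℝ)) •
    (fun w : Euc m => (innerSL ℝ w).smulRight w)) w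
  apply ContinuousAt.smul
  · exact ((continuous_norm.pow 2).continuousAt).inv₀ (pow_ne_zero 2 (norm_ne_zero_iff.2 hw))
  · have : Continuous fun w : Euc m => (innerSL ℝ w).smulRight w := by
      exact (ContinuousLinearMap.smulRightL ℝ (Euc m) (Euc m)).continuous₂.comp
        ((innerSL ℝ).continuous.prodMk continuous_id)
    exact this.continuousAt

lemma exists_gen {V : Submodule ℝ (Euc m)} (h : finrank ℝ V = 1) :
    ∃ v : Euc m, v ≠ 0 ∧ V = ℝ ∙ v := by
  have hbot : V ≠ ⊥ := by
    intro hb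
    rw [hb, finrank_bot] at h
    exact one_ne_zero h.symm
  obtain ⟨v, hvV, hv0⟩ := Submodule.exists_mem_ne_zero_of_ne_bot hbot
  refine ⟨v, hv0, ?_⟩
  have hle : (ℝ ∙ v) ≤ V := (Submodule.span_singleton_le_iff_mem v V).2 hvV
  exact (Submodule.eq_of_le_of_finrank_eq hle (by rw [finrank_span_singleton hv0, h])).symm

def mapLine (F : Euc m →L[ℝ] Euc m) (u : Gr 1 m) : Gr 1 m :=
  if h : finrank ℝ (u.1.map (F : Euc m →ₗ[ℝ] Euc m)) = 1
  then ⟨u.1.map (F : Euc m →ₗ[ℝ] Euc m), h⟩ else u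

lemma map_span_line (F : Euc m →L[ℝ] Euc m) (v : Euc m) :
    (ℝ ∙ v).map (F : Euc m →ₗ[ℝ] Euc m) = ℝ ∙ (F v) := by
  rw [Submodule.map_span, Set.image_singleton]
  rfl

lemma mapLine_coe {F : Euc m →L[ℝ] Euc m} {u : Gr 1 m} {v : Euc m}
    (hu : u.1 = ℝ ∙ v) (h0 : F v ≠ 0) :
    (mapLine F u).1 = ℝ ∙ (F v) := by
  have hm : u.1.map (F : Euc m →ₗ[ℝ] Euc m) = ℝ ∙ (F v) := by
    rw [hu, map_span_line]
  have hf : finrank ℝ (u.1.map (F : Euc m →ₗ[ℝ] Euc m)) = 1 := by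
    rw [hm]; exact finrank_span_singleton h0
  have key : mapLine F u = ⟨_, hf⟩ := dif_pos hf
  rw [key]
  exact hm

/-- local generator section -/
lemma piG_gen {u : Gr 1 m} {v : Euc m} (hv : piG u v ≠ 0) : u.1 = ℝ ∙ (piG u v) := by
  have hmem : piG u v ∈ u.1 := projC_apply_mem _ _
  have hle : (ℝ ∙ (piG u v)) ≤ u.1 := (Submodule.span_singleton_le_iff_mem _ _).2 hmem
  exact (Submodule.eq_of_le_of_finrank_eq hle (by rw [finrank_span_singleton hv, u.2])).symm

lemma continuousAt_mapLine {X : Type*} [TopologicalSpace X] {F : X → Euc m →L[ℝ] Euc m}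
    {c : X → Gr 1 m} (hF : Continuous F) (hc : Continuous c) {x0 : X}
    (h : ∀ v : Euc m, (c x0).1 = Submodule.span ℝ {v} → v ≠ 0 → F x0 v ≠ 0) :
    ContinuousAt (fun x => mapLine (F x) (c x)) x0 := by
  obtain ⟨v0, hv00, hv0⟩ := exists_gen (c x0).2
  set s : X → Euc m := fun x => piG (c x) v0 with hs
  have hscont : Continuous s := by
    have : Continuous fun x => piG (c x) := continuous_piG.comp hc
    exact this.clm_apply continuous_const
  have hs0 : s x0 = v0 := by
    have : v0 ∈ (c x0).1 := by rw [hv0]; exact Submodule.mem_span_singleton_self v0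
    exact projC_apply_of_mem this
  have hFs : Continuous fun x => F x (s x) := hF.clm_apply hscont
  have hopen : IsOpen {x : X | s x ≠ 0 ∧ F x (s x) ≠ 0} := by
    apply IsOpen.inter
    · exact isOpen_compl_singleton.preimage hscont
    · exact isOpen_compl_singleton.preimage hFs
  have hx0mem : x0 ∈ {x : X | s x ≠ 0 ∧ F x (s x) ≠ 0} := by
    constructor
    · rw [hs0]; exact hv00
    · rw [hs0]; exact h v0 hv0 hv00
  have hev : ∀ x ∈ {x : X | s x ≠ 0 ∧ F x (s x) ≠ 0},
      piG (mapLine (F x) (c x)) = lineProj (F x (s x)) := by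
    rintro x ⟨hx1, hx2⟩
    have hgen : (c x).1 = ℝ ∙ (s x) := piG_gen hx1
    have := mapLine_coe hgen hx2
    show projC (mapLine (F x) (c x)).1 = _
    rw [this, projC_span_singleton hx2]
  apply continuousAt_into_Gr
  have hmemnhds : {x : X | s x ≠ 0 ∧ F x (s x) ≠ 0} ∈ nhds x0 := hopen.mem_nhds hx0mem
  have hne : F x0 (s x0) ≠ 0 := hx0mem.2
  have h1 : ContinuousAt (lineProj ∘ fun x => F x (s x)) x0 :=
    ContinuousAt.comp (continuousAt_lineProj hne) hFs.continuousAt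
  rw [show (lineProj ∘ fun x => F x (s x)) = fun x => lineProj (F x (s x)) from rfl] at h1
  apply h1.congr
  exact Filter.eventuallyEq_of_mem hmemnhds fun x hx => (hev x hx).symm

lemma finrank_euc3 : finrank ℝ (Euc 3) = 3 := finrank_euclideanSpace_fin

lemma finrank_orth (V : Submodule ℝ (Euc 3)) :
    finrank ℝ Vᗮ = 3 - finrank ℝ V := by
  have := Submodule.finrank_add_finrank_orthogonal (K := V)
  rw [finrank_euc3] at this
  omega

lemma finrank_sup_le (U W : Submodule ℝ (Euc 3)) :
    finrank ℝ ↥(U ⊔ W) ≤ finrank ℝ U + finrank ℝ W := by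
  have := Submodule.finrank_sup_add_finrank_inf_eq U W
  omega

lemma finrank_le_3 (U : Submodule ℝ (Euc 3)) : finrank ℝ U ≤ 3 := by
  have := Submodule.finrank_le U
  rwa [finrank_euc3] at this

lemma finrank_top3 : finrank ℝ (⊤ : Submodule ℝ (Euc 3)) = 3 := by
  rw [finrank_top, finrank_euc3]

/-- two distinct planes in ℝ³ meet in a line -/
lemma plane_inf_dim {a b : Gr 2 3} (h : a.1 ≠ b.1) : finrank ℝ ↥(a.1 ⊓ b.1) = 1 := by
  have hsum := Submodule.finrank_sup_add_finrank_inf_eq a.1 b.1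
  rw [a.2, b.2] at hsum
  have hle := finrank_le_3 (a.1 ⊔ b.1)
  have h2 : finrank ℝ ↥(a.1 ⊔ b.1) ≠ 2 := by
    intro h2
    have ha : a.1 = a.1 ⊔ b.1 :=
      Submodule.eq_of_le_of_finrank_eq le_sup_left (by rw [a.2, h2])
    have hb : b.1 = a.1 ⊔ b.1 :=
      Submodule.eq_of_le_of_finrank_eq le_sup_right (by rw [b.2, h2])
    exact h (ha.trans hb.symm)
  have hge : 2 ≤ finrank ℝ ↥(a.1 ⊔ b.1) := by
    have h' := Submodule.finrank_mono (le_sup_left : a.1 ≤ a.1 ⊔ b.1)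
    rwa [a.2] at h'
  omega

lemma line_sup_dim {a b : Gr 1 3} (h : a.1 ≠ b.1) : finrank ℝ ↥(a.1 ⊔ b.1) = 2 := by
  have hsum := Submodule.finrank_sup_add_finrank_inf_eq a.1 b.1
  rw [a.2, b.2] at hsum
  have hne : finrank ℝ ↥(a.1 ⊓ b.1) ≠ 1 := by
    intro h1
    have ha : a.1 ⊓ b.1 = a.1 :=
      Submodule.eq_of_le_of_finrank_eq inf_le_left (by rw [a.2, h1])
    have hb : a.1 ⊓ b.1 = b.1 :=
      Submodule.eq_of_le_of_finrank_eq inf_le_right (by rw [b.2, h1])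
    exact h (ha.symm.trans hb)
  have hle : finrank ℝ ↥(a.1 ⊓ b.1) ≤ 1 := by
    have := Submodule.finrank_mono (inf_le_left : a.1 ⊓ b.1 ≤ a.1)
    rwa [a.2] at this
  omega

/-- distinctness of lines from spanning -/
lemma lines_ne_of_top {a b c : Gr 1 3} (h : a.1 ⊔ b.1 ⊔ c.1 = ⊤) :
    a.1 ≠ b.1 ∧ a.1 ≠ c.1 ∧ b.1 ≠ c.1 := by
  refine ⟨?_, ?_, ?_⟩ <;> intro he
  · rw [he, sup_idem] at h
    have := finrank_sup_le b.1 c.1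
    rw [h, finrank_top3, b.2, c.2] at this
    omega
  · rw [he] at h
    rw [sup_comm, ← sup_assoc, sup_idem] at h
    have := finrank_sup_le c.1 b.1
    rw [h, finrank_top3, b.2, c.2] at this
    omega
  · rw [he, sup_assoc, sup_idem] at h
    have := finrank_sup_le a.1 c.1
    rw [h, finrank_top3, a.2, c.2] at this
    omega

/-- triples of independent lines in ℝ³ -/
def IndLines (w : Gr 1 3 × Gr 1 3 × Gr 1 3) : Prop :=
  w.1.1 ⊔ w.2.1.1 ⊔ w.2.2.1 = ⊤

def LT : Type := { w : Gr 1 3 × Gr 1 3 × Gr 1 3 // IndLines w }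
instance : TopologicalSpace LT :=
  inferInstanceAs (TopologicalSpace { w : Gr 1 3 × Gr 1 3 × Gr 1 3 // IndLines w })

def perp21 (V : Gr 2 3) : Gr 1 3 := ⟨V.1ᗮ, by rw [finrank_orth, V.2]⟩
def perp12 (u : Gr 1 3) : Gr 2 3 := ⟨u.1ᗮ, by rw [finrank_orth, u.2]⟩

lemma inf3_orth (a b c : Submodule ℝ (Euc 3)) :
    aᗮ ⊓ bᗮ ⊓ cᗮ = (a ⊔ b ⊔ c)ᗮ := by
  rw [Submodule.inf_orthogonal, Submodule.inf_orthogonal]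

lemma good_iff_ind (p : Gr 2 3 × Gr 2 3 × Gr 2 3) :
    GoodTriple p ↔ IndLines (perp21 p.1, perp21 p.2.1, perp21 p.2.2) := by
  obtain ⟨l1, l2, l3⟩ := p
  simp only [GoodTriple, IndLines, perp21]
  constructor
  · rintro ⟨h12, h13, h23, hd1, hd2, hd3⟩
    -- triple intersection is ⊥
    have hT : l1.1 ⊓ l2.1 ⊓ l3.1 = ⊥ := by
      by_contra hne
      have hpos : 1 ≤ finrank ℝ ↥(l1.1 ⊓ l2.1 ⊓ l3.1) := by
        rcases Nat.eq_zero_or_pos (finrank ℝ ↥(l1.1 ⊓ l2.1 ⊓ l3.1)) with h0 | h1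
        · exact absurd (Submodule.finrank_eq_zero.1 h0) hne
        · exact h1
      have e12 : l1.1 ⊓ l2.1 ⊓ l3.1 = l1.1 ⊓ l2.1 :=
        Submodule.eq_of_le_of_finrank_le inf_le_left (by omega)
      have e13 : l1.1 ⊓ l2.1 ⊓ l3.1 = l1.1 ⊓ l3.1 :=
        Submodule.eq_of_le_of_finrank_le
          (le_inf (inf_le_left.trans inf_le_left) inf_le_right) (by omega)
      exact hd1 (e12.symm.trans e13)
    have horth : (l1.1ᗮ ⊔ l2.1ᗮ ⊔ l3.1ᗮ)ᗮ = ⊥ := by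
      rw [← inf3_orth, Submodule.orthogonal_orthogonal, Submodule.orthogonal_orthogonal,
        Submodule.orthogonal_orthogonal]
      exact hT
    exact Submodule.orthogonal_eq_bot_iff.1 horth
  · intro htop
    set a : Gr 1 3 := ⟨l1.1ᗮ, by rw [finrank_orth, l1.2]⟩
    set b : Gr 1 3 := ⟨l2.1ᗮ, by rw [finrank_orth, l2.2]⟩
    set c : Gr 1 3 := ⟨l3.1ᗮ, by rw [finrank_orth, l3.2]⟩
    have htop' : a.1 ⊔ b.1 ⊔ c.1 = ⊤ := htop
    obtain ⟨hab, hac, hbc⟩ := lines_ne_of_top htop'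
    have h12 : l1.1 ≠ l2.1 := fun he => hab (by simp [a, b, he])
    have h13 : l1.1 ≠ l3.1 := fun he => hac (by simp [a, c, he])
    have h23 : l2.1 ≠ l3.1 := fun he => hbc (by simp [b, c, he])
    have hT : l1.1 ⊓ l2.1 ⊓ l3.1 = ⊥ := by
      have : l1.1 ⊓ l2.1 ⊓ l3.1 = (a.1 ⊔ b.1 ⊔ c.1)ᗮ := by
        rw [← inf3_orth]
        simp only [a, b, c, Submodule.orthogonal_orthogonal]
      rw [this, htop', Submodule.top_orthogonal_eq_bot]
    have d12 := plane_inf_dim (a := l1) (b := l2) h12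
    have d13 := plane_inf_dim (a := l1) (b := l3) h13
    have d23 := plane_inf_dim (a := l2) (b := l3) h23
    have key : ∀ W : Submodule ℝ (Euc 3), W ≤ l1.1 ⊓ l2.1 ⊓ l3.1 → W ≠ ⊥ → False := by
      intro W hle hne
      rw [hT] at hle
      exact hne (le_bot_iff.1 hle)
    refine ⟨d12, d13, d23, ?_, ?_, ?_⟩
    · intro he
      refine key (l1.1 ⊓ l2.1) (le_inf le_rfl ?_) ?_
      · rw [he]; exact inf_le_right
      · intro hb0
        rw [hb0, finrank_bot] at d12
        omega
    · intro he
      refine key (l1.1 ⊓ l2.1) (le_inf le_rfl ?_) ?_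
      · rw [he]; exact inf_le_right
      · intro hb0
        rw [hb0, finrank_bot] at d12
        omega
    · intro he
      refine key (l1.1 ⊓ l3.1) (le_inf (le_inf inf_le_left ?_) inf_le_right) ?_
      · rw [he]; exact inf_le_left
      · intro hb0
        rw [hb0, finrank_bot] at d13
        omega

lemma perp12_perp21 (V : Gr 2 3) : perp12 (perp21 V) = V :=
  Subtype.ext (Submodule.orthogonal_orthogonal V.1)

lemma perp21_perp12 (u : Gr 1 3) : perp21 (perp12 u) = u :=
  Subtype.ext (Submodule.orthogonal_orthogonal u.1)

lemma continuous_perp21 : Continuous perp21 := by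
  apply continuous_into_Gr
  have : (fun V : Gr 2 3 => piG (perp21 V)) = fun V => 1 - piG V := by
    funext V
    exact projC_orthogonal V.1
  rw [this]
  exact continuous_const.sub continuous_piG

lemma continuous_perp12 : Continuous perp12 := by
  apply continuous_into_Gr
  have : (fun u : Gr 1 3 => piG (perp12 u)) = fun u => 1 - piG u := by
    funext u
    exact projC_orthogonal u.1
  rw [this]
  exact continuous_const.sub continuous_piG

def tri2lt (p : Triples 3) : LT :=
  ⟨(perp21 p.1.1, perp21 p.1.2.1, perp21 p.1.2.2), (good_iff_ind p.1).1 p.2⟩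

def lt2tri (w : LT) : Triples 3 :=
  ⟨(perp12 w.1.1, perp12 w.1.2.1, perp12 w.1.2.2), by
    apply (good_iff_ind _).2
    show IndLines (perp21 (perp12 w.1.1), perp21 (perp12 w.1.2.1), perp21 (perp12 w.1.2.2))
    rw [perp21_perp12, perp21_perp12, perp21_perp12]
    exact w.2⟩

def triHomeo : Triples 3 ≃ₜ LT where
  toFun := tri2lt
  invFun := lt2tri
  left_inv := by
    intro p
    apply Subtype.ext
    show (perp12 (perp21 p.1.1), perp12 (perp21 p.1.2.1), perp12 (perp21 p.1.2.2)) = p.1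
    rw [perp12_perp21, perp12_perp21, perp12_perp21]
  right_inv := by
    intro w
    apply Subtype.ext
    show (perp21 (perp12 w.1.1), perp21 (perp12 w.1.2.1), perp21 (perp12 w.1.2.2)) = w.1
    rw [perp21_perp12, perp21_perp12, perp21_perp12]
  continuous_toFun := by
    apply Continuous.subtype_mk
    have h1 : Continuous fun p : Triples 3 => p.1 := continuous_subtype_val
    exact ((continuous_perp21.comp (continuous_fst.comp h1)).prodMk
      ((continuous_perp21.comp (continuous_fst.comp (continuous_snd.comp h1))).prodMk
        (continuous_perp21.comp (continuous_snd.comp (continuous_snd.comp h1)))))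
  continuous_invFun := by
    apply Continuous.subtype_mk
    have h1 : Continuous fun w : LT => w.1 := continuous_subtype_val
    exact ((continuous_perp12.comp (continuous_fst.comp h1)).prodMk
      ((continuous_perp12.comp (continuous_fst.comp (continuous_snd.comp h1))).prodMk
        (continuous_perp12.comp (continuous_snd.comp (continuous_snd.comp h1)))))

-- component accessors for LT
lemma lt_ne12 (w : LT) : w.1.1.1 ≠ w.1.2.1.1 := (lines_ne_of_top w.2).1

lemma lt_sup12_dim (w : LT) : finrank ℝ ↥(w.1.1.1 ⊔ w.1.2.1.1) = 2 :=
  line_sup_dim (lt_ne12 w)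

def fLT (w : LT) : FlagR3 :=
  ⟨(w.1.1, ⟨w.1.1.1 ⊔ w.1.2.1.1, lt_sup12_dim w⟩), le_sup_left⟩

lemma flag_inf_dim (v : FlagR3) : finrank ℝ ↥(v.1.1.1ᗮ ⊓ v.1.2.1) = 1 := by
  have key := Submodule.sup_orthogonal_inf_of_hasOrthogonalProjection v.2
  have hinf : v.1.1.1 ⊓ (v.1.1.1ᗮ ⊓ v.1.2.1) = ⊥ := by
    apply le_bot_iff.1
    intro x hx
    have : x ∈ v.1.1.1 ⊓ v.1.1.1ᗮ := ⟨hx.1, hx.2.1⟩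
    rwa [Submodule.inf_orthogonal_eq_bot] at this
  have hsum := Submodule.finrank_sup_add_finrank_inf_eq v.1.1.1 (v.1.1.1ᗮ ⊓ v.1.2.1)
  rw [key, hinf, finrank_bot, v.1.1.2, v.1.2.2] at hsum
  omega

def gFl (v : FlagR3) : LT :=
  ⟨(v.1.1, ⟨v.1.1.1ᗮ ⊓ v.1.2.1, flag_inf_dim v⟩, perp21 v.1.2), by
    show v.1.1.1 ⊔ (v.1.1.1ᗮ ⊓ v.1.2.1) ⊔ v.1.2.1ᗮ = ⊤
    rw [Submodule.sup_orthogonal_inf_of_hasOrthogonalProjection v.2]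
    exact Submodule.sup_orthogonal_of_hasOrthogonalProjection⟩

lemma fLT_gFl (v : FlagR3) : fLT (gFl v) = v := by
  apply Subtype.ext
  have h2 : (fLT (gFl v)).1.2.1 = v.1.2.1 :=
    Submodule.sup_orthogonal_inf_of_hasOrthogonalProjection v.2
  exact Prod.ext rfl (Subtype.ext h2)

-- continuity of gFl
lemma projC_inf_orth_eq {V1 V2 : Submodule ℝ (Euc 3)} (h : V1 ≤ V2) :
    projC (V1ᗮ ⊓ V2) = projC V2 - projC V1 := by
  have horth : V1ᗮ ⊓ V2 ≤ V1ᗮ := inf_le_left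
  have := projC_sup_orth (U := V1) horth
  rw [Submodule.sup_orthogonal_inf_of_hasOrthogonalProjection h] at this
  rw [this]
  abel

lemma continuous_gFl : Continuous gFl := by
  apply Continuous.subtype_mk
  have hv : Continuous fun v : FlagR3 => v.1 := continuous_subtype_val
  have h1 : Continuous fun v : FlagR3 => v.1.1 := continuous_fst.comp hv
  have h2 : Continuous fun v : FlagR3 => v.1.2 := continuous_snd.comp hv
  refine h1.prodMk (Continuous.prodMk ?_ (continuous_perp21.comp h2))
  apply continuous_into_Gr
  have : (fun v : FlagR3 => piG (⟨v.1.1.1ᗮ ⊓ v.1.2.1, flag_inf_dim v⟩ : Gr 1 3)) =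
      fun v : FlagR3 => piG v.1.2 - piG v.1.1 := by
    funext v
    exact projC_inf_orth_eq v.2
  rw [this]
  exact ((continuous_piG.comp h2).sub (continuous_piG.comp h1))

-- the Gram–Schmidt homotopy data
def Pone (w : LT) : Euc 3 →L[ℝ] Euc 3 := piG w.1.1
def Aone (t : ℝ) (w : LT) : Euc 3 →L[ℝ] Euc 3 := 1 - t • Pone w
def Ltwo (t : ℝ) (w : LT) : Gr 1 3 := mapLine (Aone t w) w.1.2.1
def Atwo (t : ℝ) (w : LT) : Euc 3 →L[ℝ] Euc 3 := 1 - t • (Pone w + piG (Ltwo t w))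
def Lthree (t : ℝ) (w : LT) : Gr 1 3 := mapLine (Atwo t w) w.1.2.2

lemma Aone_apply (t : ℝ) (w : LT) (v : Euc 3) :
    Aone t w v = v - t • Pone w v := by
  simp [Aone]

lemma Atwo_apply (t : ℝ) (w : LT) (v : Euc 3) :
    Atwo t w v = v - t • (Pone w v + piG (Ltwo t w) v) := by
  simp [Atwo]

lemma Aone_ne (t : ℝ) (w : LT) {v : Euc 3}
    (hgen : w.1.2.1.1 = Submodule.span ℝ {v}) (hv : v ≠ 0) : Aone t w v ≠ 0 := by
  intro h0
  rw [Aone_apply, sub_eq_zero] at h0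
  have hmem : v ∈ w.1.1.1 := by
    rw [h0]
    exact Submodule.smul_mem _ _ (projC_apply_mem _ _)
  have hle : w.1.2.1.1 ≤ w.1.1.1 := by
    rw [hgen]
    exact (Submodule.span_singleton_le_iff_mem v _).2 hmem
  exact lt_ne12 w (Submodule.eq_of_le_of_finrank_eq hle
    (by rw [w.1.2.1.2, w.1.1.2])).symm

lemma Ltwo_coe (t : ℝ) (w : LT) {v : Euc 3}
    (hgen : w.1.2.1.1 = Submodule.span ℝ {v}) (hv : v ≠ 0) :
    (Ltwo t w).1 = Submodule.span ℝ {Aone t w v} :=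
  mapLine_coe hgen (Aone_ne t w hgen hv)

lemma Ltwo_le (t : ℝ) (w : LT) : (Ltwo t w).1 ≤ w.1.1.1 ⊔ w.1.2.1.1 := by
  obtain ⟨v, hv, hgen⟩ := exists_gen w.1.2.1.2
  rw [Ltwo_coe t w hgen hv, Submodule.span_singleton_le_iff_mem, Aone_apply]
  apply Submodule.sub_mem
  · exact Submodule.mem_sup_right (hgen ▸ Submodule.mem_span_singleton_self v)
  · exact Submodule.smul_mem _ _ (Submodule.mem_sup_left (projC_apply_mem _ _))

lemma Atwo_ne (t : ℝ) (w : LT) {v : Euc 3}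
    (hgen : w.1.2.2.1 = Submodule.span ℝ {v}) (hv : v ≠ 0) : Atwo t w v ≠ 0 := by
  intro h0
  rw [Atwo_apply, sub_eq_zero] at h0
  have hmem : v ∈ w.1.1.1 ⊔ w.1.2.1.1 := by
    rw [h0]
    apply Submodule.smul_mem
    apply Submodule.add_mem
    · exact Submodule.mem_sup_left (projC_apply_mem _ _)
    · exact Ltwo_le t w (projC_apply_mem _ _)
  have hle : w.1.2.2.1 ≤ w.1.1.1 ⊔ w.1.2.1.1 := by
    rw [hgen]
    exact (Submodule.span_singleton_le_iff_mem v _).2 hmem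
  have htop : w.1.1.1 ⊔ w.1.2.1.1 = ⊤ := by
    have h' : w.1.1.1 ⊔ w.1.2.1.1 ⊔ w.1.2.2.1 ≤ w.1.1.1 ⊔ w.1.2.1.1 := sup_le le_rfl hle
    rw [w.2] at h'
    exact top_le_iff.1 h'
  have := lt_sup12_dim w
  rw [htop, finrank_top3] at this
  omega

lemma Lthree_coe (t : ℝ) (w : LT) {v : Euc 3}
    (hgen : w.1.2.2.1 = Submodule.span ℝ {v}) (hv : v ≠ 0) :
    (Lthree t w).1 = Submodule.span ℝ {Atwo t w v} :=
  mapLine_coe hgen (Atwo_ne t w hgen hv)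

lemma H_mem (t : ℝ) (w : LT) : IndLines (w.1.1, Ltwo t w, Lthree t w) := by
  obtain ⟨v2, hv2, hgen2⟩ := exists_gen w.1.2.1.2
  obtain ⟨v3, hv3, hgen3⟩ := exists_gen w.1.2.2.2
  show w.1.1.1 ⊔ (Ltwo t w).1 ⊔ (Lthree t w).1 = ⊤
  apply top_le_iff.1
  rw [← w.2]
  have hS1 : w.1.1.1 ≤ w.1.1.1 ⊔ (Ltwo t w).1 ⊔ (Lthree t w).1 :=
    le_sup_left.trans le_sup_left
  have hS2 : (Ltwo t w).1 ≤ w.1.1.1 ⊔ (Ltwo t w).1 ⊔ (Lthree t w).1 :=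
    le_sup_right.trans le_sup_left
  have hS3 : (Lthree t w).1 ≤ w.1.1.1 ⊔ (Ltwo t w).1 ⊔ (Lthree t w).1 := le_sup_right
  refine sup_le (sup_le hS1 ?_) ?_
  · rw [hgen2, Submodule.span_singleton_le_iff_mem]
    have he : v2 = Aone t w v2 + t • Pone w v2 := by
      rw [Aone_apply]; abel
    rw [he]
    apply Submodule.add_mem
    · apply hS2
      rw [Ltwo_coe t w hgen2 hv2]
      exact Submodule.mem_span_singleton_self _
    · exact hS1 (Submodule.smul_mem _ _ (projC_apply_mem _ _))
  · rw [hgen3, Submodule.span_singleton_le_iff_mem]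
    have he : v3 = Atwo t w v3 + t • (Pone w v3 + piG (Ltwo t w) v3) := by
      rw [Atwo_apply]; abel
    rw [he]
    apply Submodule.add_mem
    · apply hS3
      rw [Lthree_coe t w hgen3 hv3]
      exact Submodule.mem_span_singleton_self _
    · apply Submodule.smul_mem
      apply Submodule.add_mem
      · exact hS1 (projC_apply_mem _ _)
      · exact hS2 (projC_apply_mem _ _)

lemma mapLine_one (u : Gr 1 3) : mapLine 1 u = u := by
  obtain ⟨v, hv, hgen⟩ := exists_gen u.2
  apply Subtype.ext
  have : (1 : Euc 3 →L[ℝ] Euc 3) v ≠ 0 := by simpa using hv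
  rw [mapLine_coe hgen this]
  simpa using hgen.symm

lemma Aone_zero (w : LT) : Aone 0 w = 1 := by
  refine ContinuousLinearMap.ext fun x => ?_
  simp [Aone]
lemma Ltwo_zero (w : LT) : Ltwo 0 w = w.1.2.1 := by
  rw [Ltwo, Aone_zero, mapLine_one]
lemma Atwo_zero (w : LT) : Atwo 0 w = 1 := by
  refine ContinuousLinearMap.ext fun x => ?_
  simp [Atwo]
lemma Lthree_zero (w : LT) : Lthree 0 w = w.1.2.2 := by
  rw [Lthree, Atwo_zero, mapLine_one]

lemma Ltwo_one (w : LT) :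
    (Ltwo 1 w).1 = w.1.1.1ᗮ ⊓ (w.1.1.1 ⊔ w.1.2.1.1) := by
  obtain ⟨v2, hv2, hgen2⟩ := exists_gen w.1.2.1.2
  rw [Ltwo_coe 1 w hgen2 hv2]
  set z := Aone 1 w v2 with hz
  have hzperp : z ∈ w.1.1.1ᗮ := by
    have : z = projC w.1.1.1ᗮ v2 := by
      rw [projC_orthogonal, hz, Aone_apply]
      simp [Pone, piG]
    rw [this]
    exact projC_apply_mem _ _
  have hzsup : z ∈ w.1.1.1 ⊔ w.1.2.1.1 := by
    rw [hz, Aone_apply]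
    apply Submodule.sub_mem
    · exact Submodule.mem_sup_right (hgen2 ▸ Submodule.mem_span_singleton_self v2)
    · exact Submodule.smul_mem _ _ (Submodule.mem_sup_left (projC_apply_mem _ _))
  have hzne : z ≠ 0 := Aone_ne 1 w hgen2 hv2
  have hle : Submodule.span ℝ {z} ≤ w.1.1.1ᗮ ⊓ (w.1.1.1 ⊔ w.1.2.1.1) :=
    (Submodule.span_singleton_le_iff_mem _ _).2 ⟨hzperp, hzsup⟩
  apply Submodule.eq_of_le_of_finrank_eq hle
  rw [finrank_span_singleton hzne]
  have := flag_inf_dim ⟨(w.1.1, ⟨w.1.1.1 ⊔ w.1.2.1.1, lt_sup12_dim w⟩), le_sup_left⟩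
  exact this.symm

lemma Atwo_one (w : LT) : Atwo 1 w = projC (w.1.1.1 ⊔ w.1.2.1.1)ᗮ := by
  have hL2 : piG (Ltwo 1 w) = projC (w.1.1.1ᗮ ⊓ (w.1.1.1 ⊔ w.1.2.1.1)) := by
    show projC (Ltwo 1 w).1 = _
    rw [Ltwo_one]
  have hsum : Pone w + piG (Ltwo 1 w) = projC (w.1.1.1 ⊔ w.1.2.1.1) := by
    rw [hL2]
    show projC w.1.1.1 + _ = _
    rw [projC_inf_orth_eq (le_sup_left : w.1.1.1 ≤ w.1.1.1 ⊔ w.1.2.1.1)]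
    abel
  rw [Atwo, hsum, projC_orthogonal]
  simp

lemma Lthree_one (w : LT) : (Lthree 1 w).1 = (w.1.1.1 ⊔ w.1.2.1.1)ᗮ := by
  obtain ⟨v3, hv3, hgen3⟩ := exists_gen w.1.2.2.2
  rw [Lthree_coe 1 w hgen3 hv3]
  have hz : Atwo 1 w v3 ∈ (w.1.1.1 ⊔ w.1.2.1.1)ᗮ := by
    rw [Atwo_one]
    exact projC_apply_mem _ _
  have hzne : Atwo 1 w v3 ≠ 0 := Atwo_ne 1 w hgen3 hv3
  apply Submodule.eq_of_le_of_finrank_eq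
    ((Submodule.span_singleton_le_iff_mem _ _).2 hz)
  rw [finrank_span_singleton hzne, finrank_orth, lt_sup12_dim w]

lemma sumProj (w : LT) :
    Pone w + piG (Ltwo 1 w) = projC (w.1.1.1 ⊔ w.1.2.1.1) := by
  have hL2 : piG (Ltwo 1 w) = projC (w.1.1.1ᗮ ⊓ (w.1.1.1 ⊔ w.1.2.1.1)) := by
    show projC (Ltwo 1 w).1 = _
    rw [Ltwo_one]
  rw [hL2]
  show projC w.1.1.1 + _ = _
  rw [projC_inf_orth_eq (le_sup_left : w.1.1.1 ≤ w.1.1.1 ⊔ w.1.2.1.1)]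
  abel

-- continuity of the homotopy pieces (generalized over the parameter space)
section ContPieces
variable {X : Type} [TopologicalSpace X] {τ : X → ℝ} {σ : X → LT}

lemma cont_w1 (hσ : Continuous σ) : Continuous fun x => (σ x).1.1 :=
  continuous_fst.comp (continuous_subtype_val.comp hσ)
lemma cont_w2 (hσ : Continuous σ) : Continuous fun x => (σ x).1.2.1 :=
  continuous_fst.comp (continuous_snd.comp (continuous_subtype_val.comp hσ))
lemma cont_w3 (hσ : Continuous σ) : Continuous fun x => (σ x).1.2.2 :=
  continuous_snd.comp (continuous_snd.comp (continuous_subtype_val.comp hσ))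

lemma cont_Pone (hσ : Continuous σ) : Continuous fun x => Pone (σ x) :=
  continuous_piG.comp (cont_w1 hσ)

lemma cont_Aone (hτ : Continuous τ) (hσ : Continuous σ) :
    Continuous fun x => Aone (τ x) (σ x) :=
  continuous_const.sub (hτ.smul (cont_Pone hσ))

lemma cont_Ltwo (hτ : Continuous τ) (hσ : Continuous σ) :
    Continuous fun x => Ltwo (τ x) (σ x) := by
  rw [continuous_iff_continuousAt]
  intro x0
  exact continuousAt_mapLine (cont_Aone hτ hσ) (cont_w2 hσ)
    (fun v hgen hv => Aone_ne (τ x0) (σ x0) hgen hv)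

lemma cont_Atwo (hτ : Continuous τ) (hσ : Continuous σ) :
    Continuous fun x => Atwo (τ x) (σ x) :=
  continuous_const.sub
    (hτ.smul ((cont_Pone hσ).add (continuous_piG.comp (cont_Ltwo hτ hσ))))

lemma cont_Lthree (hτ : Continuous τ) (hσ : Continuous σ) :
    Continuous fun x => Lthree (τ x) (σ x) := by
  rw [continuous_iff_continuousAt]
  intro x0
  exact continuousAt_mapLine (cont_Atwo hτ hσ) (cont_w3 hσ)
    (fun v hgen hv => Atwo_ne (τ x0) (σ x0) hgen hv)

end ContPieces

lemma continuous_fLT : Continuous fLT := by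
  show Continuous fun w : LT =>
    (⟨(w.1.1, ⟨w.1.1.1 ⊔ w.1.2.1.1, lt_sup12_dim w⟩), le_sup_left⟩ : FlagR3)
  apply Continuous.subtype_mk
  refine Continuous.prodMk (cont_w1 continuous_id) ?_
  apply continuous_into_Gr
  have he : (fun w : LT => piG (⟨w.1.1.1 ⊔ w.1.2.1.1, lt_sup12_dim w⟩ : Gr 2 3)) =
      fun w : LT => Pone w + piG (Ltwo 1 w) := by
    funext w
    exact (sumProj w).symm
  rw [he]
  exact (cont_Pone continuous_id).add
    (continuous_piG.comp (cont_Ltwo continuous_const continuous_id))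

def fC : C(LT, FlagR3) := ⟨fLT, continuous_fLT⟩
def gC : C(FlagR3, LT) := ⟨gFl, continuous_gFl⟩

def bigH : ContinuousMap.Homotopy (ContinuousMap.id LT) (gC.comp fC) where
  toFun := fun p : unitInterval × LT =>
      (⟨(p.2.1.1, Ltwo (p.1 : ℝ) p.2, Lthree (p.1 : ℝ) p.2), H_mem _ _⟩ : LT)
  continuous_toFun := by
    have hτ : Continuous fun p : unitInterval × LT => (p.1 : ℝ) :=
      continuous_subtype_val.comp continuous_fst
    have hσ : Continuous fun p : unitInterval × LT => p.2 := continuous_snd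
    apply Continuous.subtype_mk
    exact Continuous.prodMk (cont_w1 hσ)
      ((cont_Ltwo hτ hσ).prodMk (cont_Lthree hτ hσ))
  map_zero_left := by
    intro w
    apply Subtype.ext
    show (w.1.1, Ltwo ((0 : unitInterval) : ℝ) w, Lthree ((0 : unitInterval) : ℝ) w) = w.1
    have h0 : ((0 : unitInterval) : ℝ) = 0 := rfl
    rw [h0, Ltwo_zero, Lthree_zero]
  map_one_left := by
    intro w
    apply Subtype.ext
    show (w.1.1, Ltwo ((1 : unitInterval) : ℝ) w, Lthree ((1 : unitInterval) : ℝ) w) =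
      (gFl (fLT w)).1
    have h1 : ((1 : unitInterval) : ℝ) = 1 := rfl
    rw [h1]
    have e1 : (gFl (fLT w)).1.1 = w.1.1 := rfl
    have e2 : (gFl (fLT w)).1.2.1 =
        ⟨w.1.1.1ᗮ ⊓ (w.1.1.1 ⊔ w.1.2.1.1), flag_inf_dim (fLT w)⟩ := rfl
    have e3 : (gFl (fLT w)).1.2.2 = perp21 (fLT w).1.2 := rfl
    refine Prod.ext ?_ (Prod.ext ?_ ?_)
    · rw [e1]
    · rw [e2]
      exact Subtype.ext (Ltwo_one w)
    · rw [e3]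
      exact Subtype.ext (Lthree_one w)

def eqLT : ContinuousMap.HomotopyEquiv LT FlagR3 where
  toFun := fC
  invFun := gC
  left_inv := ⟨bigH.symm⟩
  right_inv := by
    have h : fC.comp gC = ContinuousMap.id FlagR3 := ContinuousMap.ext fLT_gFl
    rw [h]

theorem stmt16' : Nonempty (ContinuousMap.HomotopyEquiv (Triples 3) FlagR3) :=
  ⟨(triHomeo.toHomotopyEquiv).trans eqLT⟩

end Aux16


-- STATEMENT 16
theorem stmt16 : Nonempty (ContinuousMap.HomotopyEquiv (Triples 3) FlagR3) :=
  Aux16.stmt16'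

end
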